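/- In an associative ℚ(q)-algebra, let E, F, K, K^{-1}, F' be elements with KK^{-1}=1=K^{-1}K, [E,F] = (K−K^{-1})/(q−q^{-1}), [E,F']=0, F'K = q^{-1}KF', and F'K^{-1} = qK^{-1}F'. Set F_β := −q^{1/2}FF' + q^{-1/2}F'F. Then [E, F_β] = −q^{-1/2}·K·F'. -/

import Mathlib

/-- Quantum double relation, case α ⊏ β, in abstract form. Here v plays the role of
q^{1/2} (so q = v^2), K' plays the role of K⁻¹, and F' = F_γ for the adjacent
interval γ with β = α ⊕ γ. -/
theorem stmt12 {F A : Type*} [Field F] [Ring A] [Algebra F A]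
    (v : F) (hv : v ≠ 0) (hq : v ^ 2 - (v ^ 2)⁻¹ ≠ 0)
    (E Fa K K' F' Fβ : A)
    (hK : K * K' = 1) (hK' : K' * K = 1)
    (hEF : E * Fa - Fa * E = (v ^ 2 - (v ^ 2)⁻¹)⁻¹ • (K - K'))
    (hEF' : E * F' = F' * E)
    (hF'K : F' * K = (v ^ 2)⁻¹ • (K * F'))
    (hF'K' : F' * K' = (v ^ 2) • (K' * F'))
    (hFβ : Fβ = -(v • (Fa * F')) + v⁻¹ • (F' * Fa)) :
    E * Fβ - Fβ * E = -(v⁻¹ • (K * F')) := by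
  set c : F := (v ^ 2 - (v ^ 2)⁻¹)⁻¹ with hc
  have h1 : E * (Fa * F') - (Fa * F') * E = c • ((K - K') * F') := by
    have : E * (Fa * F') - (Fa * F') * E
        = (E * Fa - Fa * E) * F' + Fa * (E * F' - F' * E) := by noncomm_ring
    rw [this, hEF', hEF, sub_self, mul_zero, add_zero, smul_mul_assoc]
  have h2 : E * (F' * Fa) - (F' * Fa) * E = c • (F' * (K - K')) := by
    have : E * (F' * Fa) - (F' * Fa) * E
        = (E * F' - F' * E) * Fa + F' * (E * Fa - Fa * E) := by noncomm_ring
    rw [this, hEF', sub_self, zero_mul, zero_add, hEF, mul_smul_comm]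
  have hexp : E * Fβ - Fβ * E
      = -(v • (E * (Fa * F') - (Fa * F') * E)) + v⁻¹ • (E * (F' * Fa) - (F' * Fa) * E) := by
    rw [hFβ]
    simp only [mul_add, add_mul, mul_neg, neg_mul, mul_smul_comm, smul_mul_assoc, smul_sub]
    abel
  rw [hexp, h1, h2, sub_mul, mul_sub, hF'K, hF'K']
  have h4 : v ^ 4 - 1 ≠ 0 := by
    intro h
    apply hq
    have hv2 : (v ^ 2)⁻¹ = v ^ 2 := inv_eq_of_mul_eq_one_right (by linear_combination h)
    rw [hv2, sub_self]
  have hcval : c = v ^ 2 * (v ^ 4 - 1)⁻¹ := by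
    rw [hc, show v ^ 2 - (v ^ 2)⁻¹ = (v ^ 4 - 1) / v ^ 2 by field_simp, inv_div,
      div_eq_mul_inv]
  have hu : v * v⁻¹ = 1 := mul_inv_cancel₀ hv
  have hw : (v ^ 4 - 1) * (v ^ 4 - 1)⁻¹ = 1 := mul_inv_cancel₀ h4
  match_scalars
  · rw [hcval, ← inv_pow]
    linear_combination ((v ^ 4 - 1)⁻¹ * (v ^ 3 + v⁻¹ ^ 2 * v + v⁻¹)) * hu - v⁻¹ * hw
  · rw [hcval]
    linear_combination (-(v ^ 3 * (v ^ 4 - 1)⁻¹)) * hu
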